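/- For any N ≥ 1/2 and α, β ∈ ℝ/ℤ, one has T_N(α, β) ≪ sqrt(N·(1 + ‖α−β‖·N)), i.e., min over positive integers t of (t + N‖αt‖ + N‖βt‖) is bounded by an absolute constant times sqrt(N(1 + ‖α−β‖N)). -/

import Mathlib

/-- Distance from a real number to the nearest integer (the norm on ℝ/ℤ). -/
noncomputable def dz (x : ℝ) : ℝ := |x - (round x : ℝ)|

/-- `TT M N α β = min_{t ∈ ℤ₊} (t + M‖αt‖ + N‖βt‖)`. -/
noncomputable def TT (M N α β : ℝ) : ℝ :=
  ⨅ t : ℕ+, (((t : ℕ) : ℝ) + M * dz (α * ((t : ℕ) : ℝ)) + N * dz (β * ((t : ℕ) : ℝ)))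

lemma dz_nonneg (x : ℝ) : 0 ≤ dz x := abs_nonneg _

lemma dz_le_half (x : ℝ) : dz x ≤ 1 / 2 := abs_sub_round x

/-- `round` gives the closest integer. -/
lemma dz_le_int (x : ℝ) (m : ℤ) : dz x ≤ |x - (m : ℝ)| := by
  rcases eq_or_ne m (round x) with rfl | h
  · exact le_of_eq rfl
  · have h1 : (1 : ℝ) ≤ |(round x : ℝ) - (m : ℝ)| := by
      have : round x - m ≠ 0 := sub_ne_zero.2 (Ne.symm h)
      have := Int.one_le_abs this
      calc (1 : ℝ) ≤ |(round x - m : ℤ)| := by exact_mod_cast this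
        _ = |(round x : ℝ) - (m : ℝ)| := by push_cast; ring_nf
    have h2 : |x - (round x : ℝ)| ≤ 1 / 2 := abs_sub_round x
    have h3 : |(round x : ℝ) - (m : ℝ)| ≤ |x - (round x : ℝ)| + |x - (m : ℝ)| := by
      calc |(round x : ℝ) - (m : ℝ)| = |(x - (m : ℝ)) - (x - (round x : ℝ))| := by ring_nf
        _ ≤ |x - (m : ℝ)| + |x - (round x : ℝ)| := abs_sub _ _
        _ = |x - (round x : ℝ)| + |x - (m : ℝ)| := by ring
    unfold dz
    linarith

lemma dz_sub_le (a b : ℝ) : dz (a - b) ≤ dz a + dz b := by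
  have h := dz_le_int (a - b) (round a - round b)
  refine h.trans ?_
  have : |a - b - ((round a - round b : ℤ) : ℝ)|
      ≤ |a - (round a : ℝ)| + |b - (round b : ℝ)| := by
    push_cast
    calc |a - b - ((round a : ℝ) - (round b : ℝ))|
        = |(a - (round a : ℝ)) - (b - (round b : ℝ))| := by ring_nf
      _ ≤ |a - (round a : ℝ)| + |b - (round b : ℝ)| := abs_sub _ _
  simpa [dz] using this

lemma dz_mul_nat_le (x : ℝ) (k : ℕ) : dz (x * k) ≤ k * dz x := by
  have h := dz_le_int (x * k) (k * round x)
  refine h.trans (le_of_eq ?_)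
  push_cast
  rw [show x * (k : ℝ) - (k : ℝ) * (round x : ℝ) = (k : ℝ) * (x - (round x : ℝ)) by ring,
    abs_mul, abs_of_nonneg (Nat.cast_nonneg (α := ℝ) k)]
  rfl

theorem stmt_3 : ∃ C : ℝ, 0 < C ∧ ∀ N : ℝ, (1/2 : ℝ) ≤ N → ∀ α β : ℝ,
    TT N N α β ≤ C * Real.sqrt (N * (1 + dz (α - β) * N)) := by
  refine ⟨7, by norm_num, ?_⟩
  intro N hN α β
  set γ := dz (α - β) with hγdef
  have hγ0 : 0 ≤ γ := dz_nonneg _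
  have hγ1 : γ ≤ 1 := (dz_le_half _).trans (by norm_num)
  have hN0 : (0 : ℝ) < N := lt_of_lt_of_le (by norm_num) hN
  set D : ℝ := 1 + γ * N with hDdef
  have hD1 : (1 : ℝ) ≤ D := by nlinarith
  have hD0 : (0 : ℝ) < D := by linarith
  set S := Real.sqrt (N * D) with hSdef
  have hS0 : (0 : ℝ) < S := Real.sqrt_pos.2 (by positivity)
  have hSsq : S ^ 2 = N * D := Real.sq_sqrt (by positivity)
  set Q := Real.sqrt (N / D) with hQdef
  have hQ0 : (0 : ℝ) < Q := Real.sqrt_pos.2 (by positivity)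
  have hQsq : Q ^ 2 = N / D := Real.sq_sqrt (by positivity)
  have hQS : Q * S = N := by
    rw [hQdef, hSdef, ← Real.sqrt_mul (by positivity)]
    have h : N / D * (N * D) = N ^ 2 := by field_simp
    rw [h, Real.sqrt_sq hN0.le]
  have hQD : Q * D = S := by
    nlinarith [sq_nonneg (Q * D - S), sq_nonneg (Q * D + S)]
  have hD2S : D ≤ 2 * S := by
    have hD3N : D ≤ 3 * N := by nlinarith
    nlinarith [sq_nonneg (2 * S - D)]
  -- Dirichlet
  set n := ⌈Q⌉₊ with hndef
  have hn1 : 1 ≤ n := Nat.one_le_iff_ne_zero.2 (by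
    simp only [hndef, ne_eq, Nat.ceil_eq_zero, not_le]; exact hQ0)
  have hnQ : Q ≤ (n : ℝ) := Nat.le_ceil Q
  have hnQ1 : (n : ℝ) ≤ Q + 1 := le_of_lt (Nat.ceil_lt_add_one hQ0.le)
  obtain ⟨j, k, hk0, hkn, hjk⟩ := Real.exists_int_int_abs_mul_sub_le α (by omega : 0 < n)
  set t : ℕ := k.toNat with htdef
  have ht0 : 0 < t := by omega
  have htk : ((t : ℕ) : ℝ) = (k : ℝ) := by
    rw [htdef]
    exact_mod_cast congrArg (Int.cast : ℤ → ℝ) (Int.toNat_of_nonneg hk0.le)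
  have htn : ((t : ℕ) : ℝ) ≤ (n : ℝ) := by
    rw [htk]; exact_mod_cast hkn
  have hdzα : dz (α * (t : ℝ)) ≤ 1 / ((n : ℝ) + 1) := by
    refine (dz_le_int _ j).trans ?_
    rw [htk]
    calc |α * (k : ℝ) - (j : ℝ)| = |(k : ℝ) * α - (j : ℝ)| := by ring_nf
      _ ≤ 1 / ((n : ℝ) + 1) := hjk
  have hdzβ : dz (β * (t : ℝ)) ≤ 1 / ((n : ℝ) + 1) + (n : ℝ) * γ := by
    have h1 : β * (t : ℝ) = α * (t : ℝ) - (α - β) * (t : ℝ) := by ring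
    have h2 : dz (β * (t : ℝ)) ≤ dz (α * (t : ℝ)) + dz ((α - β) * (t : ℝ)) := by
      rw [h1]; exact dz_sub_le _ _
    have h3 : dz ((α - β) * (t : ℝ)) ≤ (t : ℝ) * γ := dz_mul_nat_le (α - β) t
    have h4 : (t : ℝ) * γ ≤ (n : ℝ) * γ := by
      exact mul_le_mul_of_nonneg_right htn hγ0
    linarith
  -- bound the infimum by the value at t
  have hbdd : BddBelow (Set.range fun s : ℕ+ =>
      (((s : ℕ) : ℝ) + N * dz (α * ((s : ℕ) : ℝ)) + N * dz (β * ((s : ℕ) : ℝ)))) := by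
    refine ⟨0, ?_⟩
    rintro x ⟨s, rfl⟩
    have := dz_nonneg (α * ((s : ℕ) : ℝ))
    have := dz_nonneg (β * ((s : ℕ) : ℝ))
    have : (0 : ℝ) ≤ ((s : ℕ) : ℝ) := Nat.cast_nonneg _
    positivity
  have hTT : TT N N α β ≤
      ((t : ℝ) + N * dz (α * (t : ℝ)) + N * dz (β * (t : ℝ))) := by
    exact ciInf_le hbdd (⟨t, ht0⟩ : ℕ+)
  refine hTT.trans ?_
  -- numeric estimate
  have hval : (t : ℝ) + N * dz (α * (t : ℝ)) + N * dz (β * (t : ℝ))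
      ≤ (n : ℝ) + 2 * (N / ((n : ℝ) + 1)) + N * ((n : ℝ) * γ) := by
    have h1 : N * dz (α * (t : ℝ)) ≤ N * (1 / ((n : ℝ) + 1)) :=
      mul_le_mul_of_nonneg_left hdzα hN0.le
    have h2 : N * dz (β * (t : ℝ)) ≤ N * (1 / ((n : ℝ) + 1) + (n : ℝ) * γ) :=
      mul_le_mul_of_nonneg_left hdzβ hN0.le
    have : N * (1 / ((n : ℝ) + 1)) = N / ((n : ℝ) + 1) := by ring
    nlinarith
  refine hval.trans ?_
  have hdiv : N / ((n : ℝ) + 1) ≤ S := by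
    have hQn1 : Q ≤ (n : ℝ) + 1 := by linarith
    have : N / ((n : ℝ) + 1) ≤ N / Q := by
      apply div_le_div_of_nonneg_left hN0.le hQ0 hQn1
    have hNQ : N / Q = S := by
      field_simp [hQ0.ne'] at *
      linarith [hQS]
    linarith
  have hmain : (n : ℝ) + N * ((n : ℝ) * γ) ≤ 3 * S := by
    have : (n : ℝ) + N * ((n : ℝ) * γ) = (n : ℝ) * D := by rw [hDdef]; ring
    rw [this]
    calc (n : ℝ) * D ≤ (Q + 1) * D := mul_le_mul_of_nonneg_right hnQ1 hD0.le
      _ = Q * D + D := by ring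
      _ = S + D := by rw [hQD]
      _ ≤ 3 * S := by linarith
  linarith
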